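/- Let u be a node of T with a descendant subtree T_u having leaf set L_u, let θ* ∈ (−1,1)^E and θ̂ ∈ (−1,1)^{E(T_u)}, and let σ be sampled from the CFN measure P_{θ*} on T. Then the unsigned magnetization σ_u · Z_u^{θ̂,T_u}(σ_{L_u}) is independent of the root spin σ_u under P_{θ*}. -/

import Mathlib

open Finset
open scoped Classical

noncomputable section

namespace CFN

variable {V : Type*} [Fintype V] [DecidableEq V]

/-- The `±1` spin attached to a Boolean. -/
def spin (b : Bool) : ℝ := if b then 1 else -1

/-- The product of the spins at the two endpoints of an unordered edge. -/
def edgeSpin (σ : V → Bool) : Sym2 V → ℝ :=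
  Sym2.lift ⟨fun x y => spin (σ x) * spin (σ y), fun x y => mul_comm _ _⟩

/-- The CFN weight of a configuration: `(1/2) · ∏_{e={x,y}∈F} (1 + σ_x σ_y θ_e)/2`. -/
def cfnWeight (F : Finset (Sym2 V)) (θ : Sym2 V → ℝ) (σ : V → Bool) : ℝ :=
  (1 / 2) * ∏ e ∈ F, (1 + edgeSpin σ e * θ e) / 2

/-- The probability of the event `A` under the CFN measure with vertex set `W` and edge
set `F` (the event should only depend on the coordinates in `W`; configurations are
represented as functions on the ambient vertex type, whence the normalizing factor). -/
def cfnProb (W : Finset V) (F : Finset (Sym2 V)) (θ : Sym2 V → ℝ)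
    (A : Set (V → Bool)) : ℝ :=
  ((2 : ℝ) ^ W.card / (2 : ℝ) ^ Fintype.card V) *
    ∑ σ : V → Bool, Set.indicator A (cfnWeight F θ) σ

/-- Expectation of `f` under the CFN measure on the full vertex set with edge set `F`. -/
def cfnExp (F : Finset (Sym2 V)) (θ : Sym2 V → ℝ) (f : (V → Bool) → ℝ) : ℝ :=
  ∑ σ : V → Bool, cfnWeight F θ σ * f σ

/-- The magnetization at `u` for the tree with vertex set `W`, edge set `F`, leaf set
`Lu`, parameter `θ`, and observed leaf configuration `τ`:
`P_θ(σ_u = +1 | σ_{L_u} = τ_{L_u}) − P_θ(σ_u = −1 | σ_{L_u} = τ_{L_u})`. -/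
def magnetization (W : Finset V) (F : Finset (Sym2 V)) (θ : Sym2 V → ℝ)
    (u : V) (Lu : Finset V) (τ : V → Bool) : ℝ :=
  (cfnProb W F θ {η | η u = true ∧ ∀ x ∈ Lu, η x = τ x} -
      cfnProb W F θ {η | η u = false ∧ ∀ x ∈ Lu, η x = τ x}) /
    cfnProb W F θ {η | ∀ x ∈ Lu, η x = τ x}

variable (G : SimpleGraph V) [DecidableRel G.Adj]

/-- The vertex set of the descendant subtree of `u` with respect to `v`: all vertices `w`
whose shortest path to `v` passes through `u`. -/
def descVerts (u v : V) : Finset V :=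
  Finset.univ.filter fun w => G.dist w v = G.dist w u + G.dist u v

/-- The edge set of the descendant subtree of `u` with respect to `v`. -/
def descEdges (u v : V) : Finset (Sym2 V) :=
  G.edgeFinset.filter fun e => ∀ x ∈ e, x ∈ descVerts G u v

/-- The leaf set of the tree `G`. -/
def leaves : Finset V := Finset.univ.filter fun w => G.degree w = 1

/-- The leaf set of the descendant subtree of `u` with respect to `v`. -/
def descLeaves (u v : V) : Finset V :=
  (descVerts G u v).filter fun w => G.degree w = 1

/-- The magnetization at `u` computed on the descendant subtree of `u` with respect to
`v`, with parameters `θ` and leaf data taken from the configuration `τ`. -/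
def descMag (u v : V) (θ : Sym2 V → ℝ) (τ : V → Bool) : ℝ :=
  magnetization (descVerts G u v) (descEdges G u v) θ u (descLeaves G u v) τ

end CFN


namespace CFNAux

open CFN

variable {V : Type*} [Fintype V] [DecidableEq V]

lemma spin_not (b : Bool) : CFN.spin (!b) = - CFN.spin b := by cases b <;> simp [CFN.spin]

lemma edgeSpin_mk (σ : V → Bool) (x y : V) :
    CFN.edgeSpin σ s(x, y) = CFN.spin (σ x) * CFN.spin (σ y) := rfl

lemma edgeSpin_update_not_mem (σ : V → Bool) (w : V) (c : Bool) {e : Sym2 V} (he : w ∉ e) :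
    CFN.edgeSpin (Function.update σ w c) e = CFN.edgeSpin σ e := by
  induction e with
  | _ x y =>
    simp only [Sym2.mem_iff, not_or] at he
    rw [edgeSpin_mk, edgeSpin_mk, Function.update_of_ne (Ne.symm he.1),
      Function.update_of_ne (Ne.symm he.2)]

lemma edgeSpin_update_mk (σ : V → Bool) {w x : V} (hwx : w ≠ x) :
    CFN.edgeSpin (Function.update σ w (!(σ w))) s(w, x) = - CFN.edgeSpin σ s(w, x) := by
  rw [edgeSpin_mk, edgeSpin_mk, Function.update_self, Function.update_of_ne (Ne.symm hwx),
    spin_not]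
  ring

theorem tree_path_length_eq_dist {G : SimpleGraph V} (hT : G.IsTree) {r w : V}
    {p : G.Walk r w} (hp : p.IsPath) : p.length = G.dist r w := by
  obtain ⟨q, hq, hlen⟩ := hT.isConnected.exists_path_of_dist r w
  have : p = q := (hT.existsUnique_path r w).unique hp hq
  rw [this, hlen]

theorem tree_parent_unique {G : SimpleGraph V} (hT : G.IsTree) (r w x y : V)
    (hx : G.Adj w x) (hy : G.Adj w y)
    (hdx : G.dist r x ≤ G.dist r w) (hdy : G.dist r y ≤ G.dist r w) : x = y := by
  obtain ⟨p, hp, hlen⟩ := hT.isConnected.exists_path_of_dist r w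
  have key : ∀ z : V, ∀ hz : G.Adj w z, G.dist r z ≤ G.dist r w →
      ∃ hzs : z ∈ p.support, p = (p.takeUntil z hzs).concat hz.symm := by
    intro z hz hd
    have hzs : z ∈ p.support := by
      by_contra hzs
      have hq : (p.concat hz).IsPath := by
        rw [← SimpleGraph.Walk.isPath_reverse_iff, SimpleGraph.Walk.reverse_concat,
          SimpleGraph.Walk.cons_isPath_iff]
        simpa using ⟨hp, hzs⟩
      have : (p.concat hz).length = G.dist r z := tree_path_length_eq_dist hT hq
      rw [SimpleGraph.Walk.length_concat, hlen] at this
      omega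
    refine ⟨hzs, ?_⟩
    have hzw : z ≠ w := fun h => (G.loopless.irrefl w (h ▸ hz)).elim
    have hdrop : p.dropUntil z hzs = SimpleGraph.Walk.cons hz.symm SimpleGraph.Walk.nil := by
      refine (hT.existsUnique_path z w).unique (hp.dropUntil hzs) ?_
      rw [SimpleGraph.Walk.cons_isPath_iff]
      exact ⟨SimpleGraph.Walk.IsPath.nil, by simp [hzw]⟩
    have := (p.take_spec hzs).symm
    rw [hdrop] at this
    rw [SimpleGraph.Walk.concat_eq_append]
    exact this
  obtain ⟨hxs, hxeq⟩ := key x hx hdx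
  obtain ⟨hys, hyeq⟩ := key y hy hdy
  obtain ⟨hv, -⟩ := SimpleGraph.Walk.concat_inj (hxeq.symm.trans hyeq)
  exact hv

theorem sum_prod_edgeSpin_eq_zero {G : SimpleGraph V} [DecidableRel G.Adj] (hT : G.IsTree)
    {t : Finset (Sym2 V)} (ht : t ⊆ G.edgeFinset) (htne : t.Nonempty) (θ : Sym2 V → ℝ) :
    ∑ σ : V → Bool, ∏ e ∈ t, (CFN.edgeSpin σ e * θ e) = 0 := by
  classical
  obtain ⟨e1, he1⟩ := htne
  set D : Finset V := Finset.univ.filter (fun z => ∃ e ∈ t, z ∈ e) with hD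
  have hmemD : ∀ z : V, z ∈ D ↔ ∃ e ∈ t, z ∈ e := by
    intro z; simp [hD]
  set r : V := e1.out.1 with hr
  have haD : r ∈ D := (hmemD r).mpr ⟨e1, he1, Sym2.out_fst_mem e1⟩
  obtain ⟨w, hwD, hwmax⟩ := Finset.exists_max_image D (fun z => G.dist r z) ⟨r, haD⟩
  have hwr : w ≠ r := by
    have hne : e1.out.1 ≠ e1.out.2 := by
      intro h
      exact (G.not_isDiag_of_mem_edgeSet (SimpleGraph.mem_edgeFinset.mp (ht he1)))
        (by rw [← e1.out_eq]; exact Sym2.isDiag_iff_proj_eq.mpr h)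
    have h2 : e1.out.2 ∈ D := (hmemD _).mpr ⟨e1, he1, Sym2.out_snd_mem e1⟩
    have hpos : 0 < G.dist r e1.out.2 :=
      (hT.isConnected.preconnected r e1.out.2).pos_dist_of_ne (by rw [hr]; exact hne)
    have := hwmax _ h2
    intro h
    rw [h, SimpleGraph.dist_self] at this
    omega
  obtain ⟨e0, he0t, hwe0⟩ := (hmemD w).mp hwD
  set x0 : V := Sym2.Mem.other hwe0 with hx0
  have hspec0 : s(w, x0) = e0 := Sym2.other_spec hwe0
  have hadj0 : G.Adj w x0 := by
    rw [← SimpleGraph.mem_edgeSet, hspec0]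
    exact SimpleGraph.mem_edgeFinset.mp (ht he0t)
  have hwx0 : w ≠ x0 := hadj0.ne
  have key : ∀ e ∈ t, w ∈ e → e = e0 := by
    intro e het hwe
    have hspec : s(w, Sym2.Mem.other hwe) = e := Sym2.other_spec hwe
    have hadj : G.Adj w (Sym2.Mem.other hwe) := by
      rw [← SimpleGraph.mem_edgeSet, hspec]
      exact SimpleGraph.mem_edgeFinset.mp (ht het)
    have hxD : Sym2.Mem.other hwe ∈ D := (hmemD _).mpr ⟨e, het, Sym2.other_mem hwe⟩
    have hx0D : x0 ∈ D := (hmemD _).mpr ⟨e0, he0t, Sym2.other_mem hwe0⟩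
    have := tree_parent_unique hT r w (Sym2.Mem.other hwe) x0 hadj hadj0
      (hwmax _ hxD) (hwmax _ hx0D)
    rw [← hspec, this, hspec0]
  set g : (V → Bool) → (V → Bool) := fun σ => Function.update σ w (!(σ w)) with hg
  have hginv : Function.Involutive g := by
    intro σ
    funext z
    by_cases hz : z = w
    · subst hz; simp [hg]
    · simp [hg, Function.update_of_ne hz]
  have hflip : ∀ σ, ∏ e ∈ t, (CFN.edgeSpin (g σ) e * θ e)
      = - ∏ e ∈ t, (CFN.edgeSpin σ e * θ e) := by
    intro σ
    have hcongr : ∀ e ∈ t, CFN.edgeSpin (g σ) e * θ e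
        = (if e = e0 then (-1 : ℝ) else 1) * (CFN.edgeSpin σ e * θ e) := by
      intro e het
      by_cases he : e = e0
      · subst he
        rw [if_pos rfl, ← hspec0, hg]
        rw [edgeSpin_update_mk σ hwx0]
        ring
      · have hwe : w ∉ e := fun hw => he (key e het hw)
        rw [edgeSpin_update_not_mem σ w _ hwe, if_neg he, one_mul]
    rw [Finset.prod_congr rfl hcongr, Finset.prod_mul_distrib,
      Finset.prod_eq_single_of_mem e0 he0t (fun e _ hne => if_neg hne), if_pos rfl]
    ring
  have hre : ∑ σ : V → Bool, ∏ e ∈ t, (CFN.edgeSpin (g σ) e * θ e)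
      = ∑ σ : V → Bool, ∏ e ∈ t, (CFN.edgeSpin σ e * θ e) :=
    Fintype.sum_bijective g hginv.bijective _ _ (fun σ => rfl)
  have := hre.symm.trans (Finset.sum_congr rfl (fun σ _ => hflip σ))
  rw [Finset.sum_neg_distrib] at this
  linarith

theorem sum_cfnWeight_eq_one {G : SimpleGraph V} [DecidableRel G.Adj] (hT : G.IsTree)
    (θ : Sym2 V → ℝ) : ∑ σ : V → Bool, CFN.cfnWeight G.edgeFinset θ σ = 1 := by
  classical
  set F := G.edgeFinset with hF
  set m := F.card with hm
  have hcard : m + 1 = Fintype.card V := hT.card_edgeFinset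
  have step1 : ∀ σ : V → Bool, CFN.cfnWeight F θ σ
      = (1 / 2) * ((1 / 2 : ℝ) ^ m * ∏ e ∈ F, (CFN.edgeSpin σ e * θ e + 1)) := by
    intro σ
    unfold CFN.cfnWeight
    rw [show (∏ e ∈ F, (1 + CFN.edgeSpin σ e * θ e) / 2)
        = ∏ e ∈ F, ((CFN.edgeSpin σ e * θ e + 1) * (1 / 2)) from
      Finset.prod_congr rfl (fun e _ => by ring), Finset.prod_mul_distrib,
      Finset.prod_const]
    ring
  rw [Finset.sum_congr rfl (fun σ _ => step1 σ), ← Finset.mul_sum, ← Finset.mul_sum]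
  have step2 : ∑ σ : V → Bool, ∏ e ∈ F, (CFN.edgeSpin σ e * θ e + 1)
      = (2 : ℝ) ^ Fintype.card V := by
    have expand : ∀ σ : V → Bool, ∏ e ∈ F, (CFN.edgeSpin σ e * θ e + 1)
        = ∑ t ∈ F.powerset, (∏ e ∈ t, (CFN.edgeSpin σ e * θ e)) * ∏ e ∈ F \ t, 1 :=
      fun σ => Finset.prod_add _ _ _
    rw [Finset.sum_congr rfl (fun σ _ => expand σ), Finset.sum_comm]
    rw [Finset.sum_eq_single_of_mem ∅ (Finset.mem_powerset.mpr (Finset.empty_subset F))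
      (fun t htp htne => by
        simp only [Finset.prod_const_one, mul_one]
        exact sum_prod_edgeSpin_eq_zero hT (Finset.mem_powerset.mp htp)
          (Finset.nonempty_iff_ne_empty.mpr htne) θ)]
    simp [Finset.card_univ]
  rw [step2, ← hcard]
  have h2 : (2 : ℝ) ^ m ≠ 0 := by positivity
  rw [pow_succ]
  field_simp
  rw [← mul_pow]; norm_num

/-- The global spin flip. -/
def flip (σ : V → Bool) : V → Bool := fun x => !(σ x)

lemma flip_involutive : Function.Involutive (flip : (V → Bool) → (V → Bool)) := by
  intro σ; funext x; simp [flip]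

lemma edgeSpin_flip (σ : V → Bool) (e : Sym2 V) :
    CFN.edgeSpin (flip σ) e = CFN.edgeSpin σ e := by
  induction e with
  | _ x y =>
    rw [edgeSpin_mk, edgeSpin_mk]
    show CFN.spin (!(σ x)) * CFN.spin (!(σ y)) = _
    rw [spin_not, spin_not]
    ring

lemma cfnWeight_flip (F : Finset (Sym2 V)) (θ : Sym2 V → ℝ) (σ : V → Bool) :
    CFN.cfnWeight F θ (flip σ) = CFN.cfnWeight F θ σ := by
  unfold CFN.cfnWeight
  congr 1
  exact Finset.prod_congr rfl (fun e _ => by rw [edgeSpin_flip])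

lemma cfnProb_flip (W : Finset V) (F : Finset (Sym2 V)) (θ : Sym2 V → ℝ)
    (A : Set (V → Bool)) :
    CFN.cfnProb W F θ (flip ⁻¹' A) = CFN.cfnProb W F θ A := by
  unfold CFN.cfnProb
  congr 1
  refine Fintype.sum_bijective flip flip_involutive.bijective _ _ (fun σ => ?_)
  rw [Set.indicator_apply, Set.indicator_apply, Set.mem_preimage, cfnWeight_flip]

lemma magnetization_flip (W : Finset V) (F : Finset (Sym2 V)) (θ : Sym2 V → ℝ)
    (u : V) (Lu : Finset V) (τ : V → Bool) :
    CFN.magnetization W F θ u Lu (flip τ) = - CFN.magnetization W F θ u Lu τ := by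
  unfold CFN.magnetization
  have h1 : {η : V → Bool | η u = true ∧ ∀ x ∈ Lu, η x = flip τ x}
      = flip ⁻¹' {η : V → Bool | η u = false ∧ ∀ x ∈ Lu, η x = τ x} := by
    ext η
    simp only [Set.mem_setOf_eq, Set.mem_preimage, flip, Bool.not_eq_false',
      Bool.not_eq_true', Bool.not_eq_true]
    constructor
    · rintro ⟨ha, hb⟩
      exact ⟨ha, fun x hx => by rw [hb x hx]; cases τ x <;> rfl⟩
    · rintro ⟨ha, hb⟩
      exact ⟨ha, fun x hx => by rw [← hb x hx]; cases η x <;> rfl⟩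
  have h2 : {η : V → Bool | η u = false ∧ ∀ x ∈ Lu, η x = flip τ x}
      = flip ⁻¹' {η : V → Bool | η u = true ∧ ∀ x ∈ Lu, η x = τ x} := by
    ext η
    simp only [Set.mem_setOf_eq, Set.mem_preimage, flip, Bool.not_eq_false',
      Bool.not_eq_true', Bool.not_eq_true]
    constructor
    · rintro ⟨ha, hb⟩
      exact ⟨ha, fun x hx => by rw [hb x hx]; cases τ x <;> rfl⟩
    · rintro ⟨ha, hb⟩
      exact ⟨ha, fun x hx => by rw [← hb x hx]; cases η x <;> rfl⟩
  have h3 : {η : V → Bool | ∀ x ∈ Lu, η x = flip τ x}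
      = flip ⁻¹' {η : V → Bool | ∀ x ∈ Lu, η x = τ x} := by
    ext η
    simp only [Set.mem_setOf_eq, Set.mem_preimage, flip]
    constructor
    · intro hb x hx
      rw [hb x hx]; cases τ x <;> rfl
    · intro hb x hx
      have := hb x hx
      rw [← this]; cases η x <;> rfl
  rw [h1, h2, h3, cfnProb_flip, cfnProb_flip, cfnProb_flip]
  ring

lemma descMag_flip (G : SimpleGraph V) [DecidableRel G.Adj] (u v : V) (θ : Sym2 V → ℝ)
    (τ : V → Bool) : CFN.descMag G u v θ (flip τ) = - CFN.descMag G u v θ τ :=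
  magnetization_flip _ _ _ _ _ _

lemma cfnProb_univ (F : Finset (Sym2 V)) (θ : Sym2 V → ℝ) (A : Set (V → Bool)) :
    CFN.cfnProb Finset.univ F θ A
      = ∑ σ : V → Bool, if σ ∈ A then CFN.cfnWeight F θ σ else 0 := by
  unfold CFN.cfnProb
  rw [Finset.card_univ, div_self (by positivity), one_mul]
  exact Finset.sum_congr rfl (fun σ _ => Set.indicator_apply _ _ _)

end CFNAux

/-- **Claim (independence of the unsigned magnetization and the root spin).**
If `σ ∼ P_{θ*}`, then `σ_u · Z_u^{θ̂,T_u}(σ_{L_u})` is independent of `σ_u`: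
for all sets `A, B ⊆ ℝ`,
`P(σ_u Z_u ∈ A and σ_u ∈ B) = P(σ_u Z_u ∈ A) · P(σ_u ∈ B)`. -/
theorem unsigned_magnetization_indep_root_spin
    {V : Type*} [Fintype V] [DecidableEq V] (G : SimpleGraph V) [DecidableRel G.Adj]
    (hT : G.IsTree) (hbin : ∀ w : V, G.degree w = 1 ∨ G.degree w = 3)
    (u v : V) (huv : u ≠ v)
    (θs : Sym2 V → ℝ) (hθs : ∀ e ∈ G.edgeFinset, θs e ∈ Set.Ioo (-1 : ℝ) 1)
    (θh : Sym2 V → ℝ) (hθh : ∀ e ∈ CFN.descEdges G u v, θh e ∈ Set.Ioo (-1 : ℝ) 1) :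
    ∀ A B : Set ℝ,
      CFN.cfnProb Finset.univ G.edgeFinset θs
          {σ | CFN.spin (σ u) * CFN.descMag G u v θh σ ∈ A ∧ CFN.spin (σ u) ∈ B} =
        CFN.cfnProb Finset.univ G.edgeFinset θs
            {σ | CFN.spin (σ u) * CFN.descMag G u v θh σ ∈ A} *
          CFN.cfnProb Finset.univ G.edgeFinset θs {σ | CFN.spin (σ u) ∈ B} := by
  classical
  intro A B
  set W : (V → Bool) → ℝ := CFN.cfnWeight G.edgeFinset θs with hW
  set f : (V → Bool) → ℝ := fun σ => CFN.spin (σ u) * CFN.descMag G u v θh σ with hf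
  have hWflip : ∀ σ, W (CFNAux.flip σ) = W σ := fun σ => CFNAux.cfnWeight_flip _ _ _
  have hfflip : ∀ σ, f (CFNAux.flip σ) = f σ := by
    intro σ
    show CFN.spin ((CFNAux.flip σ) u) * CFN.descMag G u v θh (CFNAux.flip σ) = _
    rw [show (CFNAux.flip σ) u = !(σ u) from rfl, CFNAux.spin_not,
      CFNAux.descMag_flip G u v θh σ]
    ring
  have huflip : ∀ σ : V → Bool, (CFNAux.flip σ) u = !(σ u) := fun _ => rfl
  -- reindexing by the global flip
  have reindex : ∀ h : (V → Bool) → ℝ,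
      (∑ σ : V → Bool, h σ) = ∑ σ : V → Bool, h (CFNAux.flip σ) := fun h =>
    (Fintype.sum_bijective CFNAux.flip CFNAux.flip_involutive.bijective _ _
      (fun σ => rfl)).symm
  have pull : ∀ (c : Prop) (inst : Decidable c) (g : (V → Bool) → ℝ),
      (∑ σ : V → Bool, @ite _ c inst (g σ) 0) = @ite _ c inst (∑ σ : V → Bool, g σ) 0 := by
    intro c inst g
    split_ifs <;> simp
  set M : ℝ := ∑ σ : V → Bool, if f σ ∈ A ∧ σ u = true then W σ else 0 with hM
  have hMf : (∑ σ : V → Bool, if f σ ∈ A ∧ σ u = false then W σ else 0) = M := by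
    rw [hM]
    refine (reindex (fun σ => if f σ ∈ A ∧ σ u = false then W σ else 0)).trans ?_
    refine Finset.sum_congr rfl (fun σ _ => ?_)
    simp only [hfflip, huflip, hWflip, Bool.not_eq_false']
  set Ht : ℝ := ∑ σ : V → Bool, if σ u = true then W σ else 0 with hHt
  have hHf : (∑ σ : V → Bool, if σ u = false then W σ else 0) = Ht := by
    rw [hHt]
    refine (reindex (fun σ => if σ u = false then W σ else 0)).trans ?_
    refine Finset.sum_congr rfl (fun σ _ => ?_)
    simp only [hfflip, huflip, hWflip, Bool.not_eq_false']
  have htotal : Ht + Ht = 1 := by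
    nth_rewrite 2 [← hHf]
    rw [hHt, ← Finset.sum_add_distrib]
    calc (∑ σ : V → Bool, ((if σ u = true then W σ else 0) + if σ u = false then W σ else 0))
        = ∑ σ : V → Bool, W σ := by
          refine Finset.sum_congr rfl (fun σ _ => ?_)
          cases h : σ u <;> simp [h]
      _ = 1 := CFNAux.sum_cfnWeight_eq_one hT θs
  have hHt2 : Ht = 1 / 2 := by linarith
  -- the three probabilities
  have hPA : CFN.cfnProb Finset.univ G.edgeFinset θs
      {σ | CFN.spin (σ u) * CFN.descMag G u v θh σ ∈ A} = M + M := by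
    rw [CFNAux.cfnProb_univ]
    nth_rewrite 2 [← hMf]
    rw [hM, ← Finset.sum_add_distrib]
    refine Finset.sum_congr rfl (fun σ _ => ?_)
    have : σ ∈ {σ : V → Bool | CFN.spin (σ u) * CFN.descMag G u v θh σ ∈ A} ↔ f σ ∈ A :=
      Iff.rfl
    rw [if_congr this rfl rfl]
    cases h : σ u <;> by_cases hA : f σ ∈ A <;> simp [h, hA, hW]
  have hPB : CFN.cfnProb Finset.univ G.edgeFinset θs {σ | CFN.spin (σ u) ∈ B}
      = (if (1 : ℝ) ∈ B then Ht else 0) + (if (-1 : ℝ) ∈ B then Ht else 0) := by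
    rw [CFNAux.cfnProb_univ]
    have hsplit : ∀ σ : V → Bool,
        (if σ ∈ {σ : V → Bool | CFN.spin (σ u) ∈ B} then W σ else 0)
          = (if (1 : ℝ) ∈ B then (if σ u = true then W σ else 0) else 0)
            + (if (-1 : ℝ) ∈ B then (if σ u = false then W σ else 0) else 0) := by
      intro σ
      have : σ ∈ {σ : V → Bool | CFN.spin (σ u) ∈ B} ↔ CFN.spin (σ u) ∈ B := Iff.rfl
      rw [if_congr this rfl rfl]
      cases h : σ u <;> by_cases h1 : (1 : ℝ) ∈ B <;> by_cases h2 : (-1 : ℝ) ∈ B <;>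
        simp [h, h1, h2, CFN.spin]
    rw [Finset.sum_congr rfl (fun σ _ => hsplit σ), Finset.sum_add_distrib, pull, pull]
    congr 1 <;> split_ifs <;> simp [hHf, ← hHt]
  have hPAB : CFN.cfnProb Finset.univ G.edgeFinset θs
      {σ | CFN.spin (σ u) * CFN.descMag G u v θh σ ∈ A ∧ CFN.spin (σ u) ∈ B}
      = (if (1 : ℝ) ∈ B then M else 0) + (if (-1 : ℝ) ∈ B then M else 0) := by
    unfold CFN.cfnProb
    rw [Finset.card_univ, div_self (by positivity), one_mul]
    have hsplit : ∀ σ : V → Bool,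
        Set.indicator {σ : V → Bool | CFN.spin (σ u) * CFN.descMag G u v θh σ ∈ A
            ∧ CFN.spin (σ u) ∈ B} (CFN.cfnWeight G.edgeFinset θs) σ
          = (if (1 : ℝ) ∈ B then (if f σ ∈ A ∧ σ u = true then W σ else 0) else 0)
            + (if (-1 : ℝ) ∈ B then (if f σ ∈ A ∧ σ u = false then W σ else 0) else 0) := by
      intro σ
      by_cases hc : σ ∈ {σ : V → Bool | CFN.spin (σ u) * CFN.descMag G u v θh σ ∈ A
          ∧ CFN.spin (σ u) ∈ B}
      · rw [Set.indicator_of_mem hc]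
        simp only [Set.mem_setOf_eq] at hc
        obtain ⟨hA, hB⟩ := hc
        have hfA : f σ ∈ A := by rw [hf]; exact hA
        cases h : σ u
        · rw [h] at hB
          have h2 : (-1 : ℝ) ∈ B := by simpa [CFN.spin] using hB
          simp [h, hfA, h2, ← hW]
        · rw [h] at hB
          have h1 : (1 : ℝ) ∈ B := by simpa [CFN.spin] using hB
          simp [h, hfA, h1, ← hW]
      · rw [Set.indicator_of_notMem hc]
        simp only [Set.mem_setOf_eq] at hc
        have z1 : (if (1 : ℝ) ∈ B then (if f σ ∈ A ∧ σ u = true then W σ else 0) else 0)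
            = 0 := by
          split_ifs with h1 hC
          · exact (hc ⟨by simpa [hf] using hC.1, by simp [CFN.spin, hC.2]; exact h1⟩).elim
          · rfl
          · rfl
        have z2 : (if (-1 : ℝ) ∈ B then (if f σ ∈ A ∧ σ u = false then W σ else 0) else 0)
            = 0 := by
          split_ifs with h2 hC
          · exact (hc ⟨by simpa [hf] using hC.1, by simp [CFN.spin, hC.2]; exact h2⟩).elim
          · rfl
          · rfl
        rw [z1, z2, add_zero]
    refine Eq.trans (Finset.sum_congr rfl (fun σ _ => hsplit σ)) ?_
    rw [Finset.sum_add_distrib, pull, pull]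
    congr 1 <;> split_ifs <;> simp [hMf, ← hM]
  rw [hPA, hPB, hPAB, hHt2]
  by_cases h1 : (1 : ℝ) ∈ B <;> by_cases h2 : (-1 : ℝ) ∈ B <;> simp [h1, h2] <;> ring
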